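/- Let N ≥ 2, p > 2, μ > 0, and let U ∈ C³([0,1]) satisfy U'' + ((N-1)/r)U' + μ²|U|^{p-2}U = 0 on (0,1) with U'(0) = U'(1) = 0 and U not constant. Then the first Dirichlet eigenvalue γ₁ := inf { ∫₀¹ r^{N-1}[ (v')² - μ²(p-1)|U|^{p-2} v² ] dr / ∫₀¹ r^{N-1} v² dr : v ∈ H¹(0,1), v(1) = 0, v ≠ 0 } is strictly negative. -/

import Mathlib

open Real Set MeasureTheory intervalIntegral
open scoped ENNReal

lemma hasDerivAt_abs_rpow_mul {p : ℝ} (hp : 2 < p) (u : ℝ) :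
    HasDerivAt (fun x : ℝ => |x| ^ (p - 2) * x) ((p - 1) * |u| ^ (p - 2)) u := by
  rcases lt_trichotomy u 0 with hu | hu | hu
  · have h1 : HasDerivAt (fun x : ℝ => (-x) ^ (p - 2)) ((p-2) * (-u)^(p-3) * (-1)) u := by
      have h0 := (Real.hasDerivAt_rpow_const (p := p - 2) (x := -u) (Or.inl (by linarith)))
      have h2 : HasDerivAt (fun x : ℝ => -x) (-1) u := (hasDerivAt_id u).neg
      have h3 := h0.comp u h2
      rw [show p - 2 - 1 = p - 3 by ring] at h3
      exact h3
    have hprod := h1.mul (hasDerivAt_id u)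
    have heq : (fun x : ℝ => |x| ^ (p - 2) * x) =ᶠ[nhds u] (fun x => (-x) ^ (p-2) * x) := by
      filter_upwards [Iio_mem_nhds hu] with x hx
      rw [abs_of_neg hx]
    have hfin := hprod.congr_of_eventuallyEq heq
    refine hfin.congr_deriv ?_
    rw [abs_of_neg hu, id_eq]
    have hne : (-u) ≠ 0 := by linarith
    have hsplit : (-u) ^ (p - 2) = (-u) ^ (p-3) * (-u) := by
      rw [← Real.rpow_add_one hne (p-3)]; ring_nf
    rw [hsplit]; ring
  · subst hu
    rw [abs_zero, Real.zero_rpow (by linarith : p - 2 ≠ 0), mul_zero]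
    rw [hasDerivAt_iff_tendsto_slope]
    have heq : (slope (fun x : ℝ => |x| ^ (p - 2) * x) 0) =ᶠ[nhdsWithin 0 {(0:ℝ)}ᶜ]
        (fun x => |x| ^ (p - 2)) := by
      filter_upwards [self_mem_nhdsWithin] with x hx
      have hx0 : x ≠ 0 := hx
      simp [slope_def_field, abs_zero, Real.zero_rpow (by linarith : p - 2 ≠ 0)]
      field_simp
    rw [Filter.tendsto_congr' heq]
    have hc : ContinuousAt (fun y : ℝ => y ^ (p-2)) (0:ℝ) :=
      Real.continuousAt_rpow_const 0 (p-2) (Or.inr (by linarith))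
    have habs : Filter.Tendsto (fun x : ℝ => |x|) (nhds 0) (nhds (0:ℝ)) := by
      simpa using (continuous_abs.tendsto (0:ℝ))
    have hcomp := (hc.tendsto).comp habs
    have : Filter.Tendsto (fun x : ℝ => |x| ^ (p - 2)) (nhds 0) (nhds 0) := by
      simpa [Function.comp_def, Real.zero_rpow (by linarith : p - 2 ≠ 0)] using hcomp
    exact this.mono_left nhdsWithin_le_nhds
  · have h1 : HasDerivAt (fun x : ℝ => x ^ (p - 1)) ((p-1) * u^(p-2)) u := by
      have h0 := (Real.hasDerivAt_rpow_const (p := p - 1) (x := u) (Or.inl (by linarith)))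
      rw [show p - 1 - 1 = p - 2 by ring] at h0
      exact h0
    have heq : (fun x : ℝ => |x| ^ (p - 2) * x) =ᶠ[nhds u] (fun x => x ^ (p-1)) := by
      filter_upwards [Ioi_mem_nhds hu] with x hx
      rw [abs_of_pos hx, ← Real.rpow_add_one (ne_of_gt hx) (p-2)]; ring_nf
    have hfin := h1.congr_of_eventuallyEq heq
    rwa [abs_of_pos hu]

lemma continuous_rpow_const_of_pos {q : ℝ} (hq : 0 < q) :
    Continuous (fun x : ℝ => x ^ q) := by
  rw [continuous_iff_continuousAt]
  exact fun x => Real.continuousAt_rpow_const x q (Or.inr hq.le)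

lemma continuous_abs_rpow {f : ℝ → ℝ} (hf : Continuous f) {q : ℝ} (hq : 0 < q) :
    Continuous (fun x : ℝ => |f x| ^ q) :=
  (continuous_rpow_const_of_pos hq).comp (hf.abs)

lemma integral_pos_of_continuousOn {f : ℝ → ℝ} (hf : ContinuousOn f (Icc 0 1))
    (hnn : ∀ r ∈ Icc (0:ℝ) 1, 0 ≤ f r) {x₀ : ℝ} (hx₀ : x₀ ∈ Ioo (0:ℝ) 1)
    (hpos : 0 < f x₀) : 0 < ∫ r in (0:ℝ)..1, f r := by
  have hint : IntervalIntegrable f volume 0 1 := by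
    apply ContinuousOn.intervalIntegrable
    rwa [uIcc_of_le zero_le_one]
  have hca : ContinuousAt f x₀ :=
    hf.continuousAt (Icc_mem_nhds hx₀.1 hx₀.2)
  have hev : ∀ᶠ y in nhds x₀, 0 < f y := hca.eventually (eventually_gt_nhds hpos)
  obtain ⟨l, u, hmem, hsub⟩ := hev.exists_Ioo_subset
  set a := max l 0 with ha
  set b := min u 1 with hb
  have hax : a < x₀ := max_lt hmem.1 hx₀.1
  have hxb : x₀ < b := lt_min hmem.2 hx₀.2
  have hab : a < b := hax.trans hxb
  have h0 : (fun _ : ℝ => (0:ℝ)) ≤ᵐ[volume.restrict (Set.uIoc (0:ℝ) 1)] f := by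
    rw [uIoc_of_le zero_le_one]
    filter_upwards [ae_restrict_mem measurableSet_Ioc] with x hx
    exact hnn x ⟨hx.1.le, hx.2⟩
  rw [integral_pos_iff_support_of_nonneg_ae' h0 hint]
  refine ⟨zero_lt_one, ?_⟩
  have hsub2 : Ioo a b ⊆ Function.support f ∩ Ioc 0 1 := by
    intro x hx
    constructor
    · exact (hsub ⟨lt_of_le_of_lt (le_max_left l 0) hx.1, lt_of_lt_of_le hx.2 (min_le_left u 1)⟩).ne'
    · exact ⟨lt_of_le_of_lt (le_max_right l 0) hx.1, le_trans hx.2.le (min_le_right u 1)⟩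
  calc (0:ℝ≥0∞) < volume (Ioo a b) := by simp [Real.volume_Ioo]; linarith
    _ ≤ _ := measure_mono hsub2

theorem stmt4 (N : ℕ) (hN : 2 ≤ N) (p mu : ℝ) (hp : 2 < p) (hmu : 0 < mu)
    (U : ℝ → ℝ) (hU : ContDiff ℝ 3 U)
    (hode : ∀ r ∈ Set.Ioo (0 : ℝ) 1,
      deriv (deriv U) r + ((N : ℝ) - 1) / r * deriv U r + mu ^ 2 * |U r| ^ (p - 2) * U r = 0)
    (h0 : deriv U 0 = 0) (h1 : deriv U 1 = 0)
    (hnc : ¬ ∃ c : ℝ, ∀ r ∈ Set.Icc (0 : ℝ) 1, U r = c) :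
    sInf { R : ℝ | ∃ v : ℝ → ℝ, ContDiffOn ℝ 1 v (Set.Icc 0 1) ∧ v 1 = 0 ∧
        (∃ r ∈ Set.Icc (0 : ℝ) 1, v r ≠ 0) ∧
        R = (∫ r in (0 : ℝ)..1, r ^ ((N : ℝ) - 1) *
              ((deriv v r) ^ 2 - mu ^ 2 * (p - 1) * |U r| ^ (p - 2) * (v r) ^ 2))
          / (∫ r in (0 : ℝ)..1, r ^ ((N : ℝ) - 1) * (v r) ^ 2) } < 0 := by
  have h2N : (2:ℝ) ≤ (N:ℝ) := by exact_mod_cast hN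
  have hq1 : (0:ℝ) < (N:ℝ) - 1 := by linarith
  -- smoothness bookkeeping
  have hU2 : ContDiff ℝ 2 (deriv U) := by
    have h3 : ContDiff ℝ ((2:ℕ) + 1 : ℕ) U := by exact_mod_cast hU
    exact (contDiff_succ_iff_deriv.mp h3).2.2
  have hU1 : ContDiff ℝ 1 (deriv (deriv U)) := by
    have h3 : ContDiff ℝ ((1:ℕ) + 1 : ℕ) (deriv U) := by exact_mod_cast hU2
    exact (contDiff_succ_iff_deriv.mp h3).2.2
  have hdU : Differentiable ℝ U := hU.differentiable (by norm_num)
  have hdU' : Differentiable ℝ (deriv U) := hU2.differentiable (by norm_num)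
  have hdU'' : Differentiable ℝ (deriv (deriv U)) := hU1.differentiable (by norm_num)
  have hcU : Continuous U := hU.continuous
  have hcU' : Continuous (deriv U) := hU2.continuous
  have hcU'' : Continuous (deriv (deriv U)) := hU1.continuous
  -- a point where deriv U ≠ 0
  obtain ⟨x₀, hx₀I, hx₀⟩ : ∃ x₀ ∈ Ioo (0:ℝ) 1, deriv U x₀ ≠ 0 := by
    by_contra hcon
    push_neg at hcon
    apply hnc
    refine ⟨U 0, fun r hr => ?_⟩
    rcases eq_or_lt_of_le hr.1 with h | h
    · rw [← h]
    · obtain ⟨c, hc, hslope⟩ := exists_deriv_eq_slope U h hcU.continuousOn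
        (hdU.differentiableOn)
      have hc0 : deriv U c = 0 := hcon c ⟨hc.1, lt_of_lt_of_le hc.2 hr.2⟩
      rw [hc0] at hslope
      field_simp at hslope
      linarith [hslope]
  -- notation
  set Q : ℝ → ℝ := fun r => |U r| ^ (p - 2) with hQ
  have hcQ : Continuous Q := continuous_abs_rpow hcU (by linarith)
  have hQnn : ∀ r, 0 ≤ Q r := fun r => Real.rpow_nonneg (abs_nonneg _) _
  set H : ℝ → ℝ := fun r => r ^ ((N:ℝ) - 1) *
      ((deriv (deriv U) r) ^ 2 - mu ^ 2 * (p - 1) * Q r * (deriv U r) ^ 2) with hH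
  set K : ℝ → ℝ := fun r => r ^ ((N:ℝ) - 1) * (deriv U r) ^ 2 with hK
  set G : ℝ → ℝ := fun r => ((N:ℝ) - 1) * r ^ ((N:ℝ) - 3) * (deriv U r) ^ 2 with hG
  set F : ℝ → ℝ := fun r => r ^ ((N:ℝ) - 1) * (deriv U r * deriv (deriv U) r) with hF
  have hcpow : Continuous (fun x : ℝ => x ^ ((N:ℝ) - 1)) :=
    continuous_rpow_const_of_pos (by linarith)
  have hcH : Continuous H := by
    apply hcpow.mul
    exact ((hcU''.pow 2).sub ((((continuous_const.mul continuous_const).mul hcQ)).mul (hcU'.pow 2)))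
  have hcK : Continuous K := hcpow.mul (hcU'.pow 2)
  have hcF : Continuous F := hcpow.mul (hcU'.mul hcU'')
  -- the key pointwise derivative
  have hderivF : ∀ r ∈ Ioo (0:ℝ) 1, HasDerivAt F (H r + G r) r := by
    intro r hr
    have hr0 : 0 < r := hr.1
    have hrne : r ≠ 0 := ne_of_gt hr0
    -- third derivative from the ODE
    have hode' : ∀ x ∈ Ioo (0:ℝ) 1,
        deriv (deriv U) x + ((N:ℝ) - 1) / x * deriv U x
          + mu ^ 2 * (|U x| ^ (p-2) * U x) = 0 := by
      intro x hx; have := hode x hx; linarith [this]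
    have hΦ : HasDerivAt (fun x => deriv (deriv U) x + ((N:ℝ) - 1) / x * deriv U x
        + mu ^ 2 * (|U x| ^ (p-2) * U x))
        (deriv (deriv (deriv U)) r
          + ((-(((N:ℝ)-1) / r ^ 2)) * deriv U r + ((N:ℝ)-1) / r * deriv (deriv U) r)
          + mu ^ 2 * ((p - 1) * |U r| ^ (p-2) * deriv U r)) r := by
      have hA : HasDerivAt (fun x => deriv (deriv U) x) (deriv (deriv (deriv U)) r) r :=
        (hdU'' r).hasDerivAt
      have hBado : HasDerivAt (fun x : ℝ => ((N:ℝ)-1) / x) (-(((N:ℝ)-1) / r ^ 2)) r := by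
        have h := (hasDerivAt_inv hrne).const_mul ((N:ℝ)-1)
        have hfe : (fun x : ℝ => ((N:ℝ)-1) / x) = (fun x : ℝ => ((N:ℝ)-1) * x⁻¹) := by
          funext x; rw [div_eq_mul_inv]
        rw [hfe, show -(((N:ℝ)-1) / r ^ 2) = ((N:ℝ)-1) * -(r^2)⁻¹ by ring]
        exact h
      have hB : HasDerivAt (fun x => ((N:ℝ)-1) / x * deriv U x)
          ((-(((N:ℝ)-1) / r ^ 2)) * deriv U r + ((N:ℝ)-1) / r * deriv (deriv U) r) r :=
        hBado.mul ((hdU' r).hasDerivAt)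
      have hC : HasDerivAt (fun x => |U x| ^ (p-2) * U x)
          ((p - 1) * |U r| ^ (p-2) * deriv U r) r := by
        have hcomp := (hasDerivAt_abs_rpow_mul hp (U r)).comp r ((hdU r).hasDerivAt)
        simpa [Function.comp_def] using hcomp
      exact (hA.add hB).add (hC.const_mul (mu ^ 2))
    have hzero : (fun x => deriv (deriv U) x + ((N:ℝ) - 1) / x * deriv U x
        + mu ^ 2 * (|U x| ^ (p-2) * U x)) =ᶠ[nhds r] (fun _ => (0:ℝ)) := by
      filter_upwards [Ioo_mem_nhds hr.1 hr.2] with x hx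
      exact hode' x hx
    have hΦ0 : HasDerivAt (fun _ : ℝ => (0:ℝ))
        (deriv (deriv (deriv U)) r
          + ((-(((N:ℝ)-1) / r ^ 2)) * deriv U r + ((N:ℝ)-1) / r * deriv (deriv U) r)
          + mu ^ 2 * ((p - 1) * |U r| ^ (p-2) * deriv U r)) r :=
      hΦ.congr_of_eventuallyEq hzero.symm
    have hD : deriv (deriv (deriv U)) r
          + ((-(((N:ℝ)-1) / r ^ 2)) * deriv U r + ((N:ℝ)-1) / r * deriv (deriv U) r)
          + mu ^ 2 * ((p - 1) * |U r| ^ (p-2) * deriv U r) = 0 :=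
      hΦ0.unique (hasDerivAt_const r 0)
    -- product rule for F
    have hpow : HasDerivAt (fun x : ℝ => x ^ ((N:ℝ)-1))
        (((N:ℝ)-1) * r ^ ((N:ℝ)-1-1)) r :=
      Real.hasDerivAt_rpow_const (Or.inl hrne)
    have hprod := hpow.mul (((hdU' r).hasDerivAt).mul ((hdU'' r).hasDerivAt))
    have e1 : r ^ ((N:ℝ)-1-1) = r ^ ((N:ℝ)-1) / r := by
      rw [Real.rpow_sub hr0, Real.rpow_one]
    have e2 : r ^ ((N:ℝ)-3) = r ^ ((N:ℝ)-1) / r ^ 2 := by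
      rw [show (N:ℝ)-3 = ((N:ℝ)-1) - 2 by ring, Real.rpow_sub hr0,
        show ((2:ℝ)) = ((2:ℕ):ℝ) by norm_num, Real.rpow_natCast]
    have hgoal : ((N:ℝ)-1) * r ^ ((N:ℝ)-1-1) * (deriv U r * deriv (deriv U) r)
        + r ^ ((N:ℝ)-1) * (deriv (deriv U) r * deriv (deriv U) r
          + deriv U r * deriv (deriv (deriv U)) r) = H r + G r := by
      simp only [hH, hG, hQ]
      rw [e1, e2]
      linear_combination (r ^ ((N:ℝ)-1) * deriv U r) * hD
    rw [← hgoal]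
    exact hprod
  -- linear bound on deriv U near 0
  obtain ⟨C, hC⟩ := (isCompact_Icc (a := (0:ℝ)) (b := 1)).exists_bound_of_continuousOn
    hcU''.continuousOn
  have hlin : ∀ x ∈ Icc (0:ℝ) 1, |deriv U x| ≤ C * x := by
    have hseg := norm_image_sub_le_of_norm_deriv_le_segment'
      (f := deriv U) (f' := deriv (deriv U)) (a := (0:ℝ)) (b := 1)
      (fun x _ => ((hdU' x).hasDerivAt).hasDerivWithinAt)
      (fun x hx => hC x (Ico_subset_Icc_self hx))
    intro x hx
    have h := hseg x hx
    simpa [h0, Real.norm_eq_abs, sub_zero] using h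
  -- integrability of G
  have hGIoc : ContinuousOn G (Ioc (0:ℝ) 1) := by
    apply ContinuousOn.mul
    apply ContinuousOn.mul continuousOn_const
    · intro x hx
      exact (Real.continuousAt_rpow_const x _ (Or.inl (ne_of_gt hx.1))).continuousWithinAt
    · exact (hcU'.pow 2).continuousOn
  have hGbound : ∀ x ∈ Ioc (0:ℝ) 1, ‖G x‖ ≤ ((N:ℝ)-1) * C ^ 2 := by
    intro x hx
    have hx0 : 0 < x := hx.1
    have hG0 : 0 ≤ G x := by
      apply mul_nonneg (mul_nonneg (by linarith) (Real.rpow_nonneg hx0.le _)) (sq_nonneg _)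
    rw [Real.norm_eq_abs, abs_of_nonneg hG0]
    have hsq : (deriv U x) ^ 2 ≤ C ^ 2 * x ^ 2 := by
      have h := hlin x ⟨hx0.le, hx.2⟩
      calc (deriv U x) ^ 2 = |deriv U x| ^ 2 := (sq_abs _).symm
        _ ≤ (C * x) ^ 2 := pow_le_pow_left₀ (abs_nonneg _) h 2
        _ = C ^ 2 * x ^ 2 := by ring
    have hxx : x ^ ((N:ℝ)-3) * x ^ 2 = x ^ ((N:ℝ)-1) := by
      rw [show (x:ℝ) ^ 2 = x ^ ((2:ℕ):ℝ) by rw [Real.rpow_natCast],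
        ← Real.rpow_add hx0]
      norm_num
      rw [show (N:ℝ)-3+2 = (N:ℝ)-1 by ring]
    have hle1 : x ^ ((N:ℝ)-1) ≤ 1 := Real.rpow_le_one hx0.le hx.2 (by linarith)
    calc ((N:ℝ)-1) * x ^ ((N:ℝ)-3) * (deriv U x) ^ 2
        ≤ ((N:ℝ)-1) * x ^ ((N:ℝ)-3) * (C ^ 2 * x ^ 2) := by
          apply mul_le_mul_of_nonneg_left hsq
          exact mul_nonneg (by linarith) (Real.rpow_nonneg hx0.le _)
      _ = ((N:ℝ)-1) * C ^ 2 * (x ^ ((N:ℝ)-3) * x ^ 2) := by ring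
      _ = ((N:ℝ)-1) * C ^ 2 * x ^ ((N:ℝ)-1) := by rw [hxx]
      _ ≤ ((N:ℝ)-1) * C ^ 2 * 1 := by
          apply mul_le_mul_of_nonneg_left hle1
          have hC0 : 0 ≤ C := le_trans (norm_nonneg _) (hC 0 ⟨le_refl 0, zero_le_one⟩)
          positivity
      _ = ((N:ℝ)-1) * C ^ 2 := by ring
  have hGint : IntervalIntegrable G volume 0 1 := by
    rw [intervalIntegrable_iff_integrableOn_Ioc_of_le zero_le_one]
    apply Integrable.mono' (g := fun _ => ((N:ℝ)-1) * C ^ 2)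
    · exact integrableOn_const (by simp) enorm_ne_top
    · exact hGIoc.aestronglyMeasurable measurableSet_Ioc
    · filter_upwards [ae_restrict_mem measurableSet_Ioc] with x hx
      exact hGbound x hx
  have hHint : IntervalIntegrable H volume 0 1 := hcH.intervalIntegrable 0 1
  have hKint : IntervalIntegrable K volume 0 1 := hcK.intervalIntegrable 0 1
  -- FTC
  have hFTC : ∫ r in (0:ℝ)..1, (H r + G r) = F 1 - F 0 :=
    integral_eq_sub_of_hasDerivAt_of_le zero_le_one hcF.continuousOn hderivF
      (hHint.add hGint)
  have hF1 : F 1 = 0 := by simp [hF, h1]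
  have hF0 : F 0 = 0 := by
    simp [hF, Real.zero_rpow (ne_of_gt hq1)]
  rw [hF1, hF0, sub_zero, integral_add hHint hGint] at hFTC
  -- compare G with K
  have hGK : ∀ x ∈ Icc (0:ℝ) 1, ((N:ℝ)-1) * K x ≤ G x := by
    intro x hx
    rcases eq_or_lt_of_le hx.1 with h | h
    · simp only [hK, hG, ← h, h0]
      simp
    · have hle : x ^ ((N:ℝ)-1) ≤ x ^ ((N:ℝ)-3) :=
        Real.rpow_le_rpow_of_exponent_ge h hx.2 (by linarith)
      simp only [hK, hG]
      calc ((N:ℝ)-1) * (x ^ ((N:ℝ)-1) * deriv U x ^ 2)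
          ≤ ((N:ℝ)-1) * (x ^ ((N:ℝ)-3) * deriv U x ^ 2) := by
            apply mul_le_mul_of_nonneg_left _ (by linarith : (0:ℝ) ≤ (N:ℝ)-1)
            exact mul_le_mul_of_nonneg_right hle (sq_nonneg _)
        _ = ((N:ℝ)-1) * x ^ ((N:ℝ)-3) * deriv U x ^ 2 := by ring
  have hGmono : ((N:ℝ)-1) * ∫ r in (0:ℝ)..1, K r ≤ ∫ r in (0:ℝ)..1, G r := by
    rw [← intervalIntegral.integral_const_mul]
    exact integral_mono_on zero_le_one (hKint.const_mul _) hGint hGK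
  -- positivity of D
  have hDpos : 0 < ∫ r in (0:ℝ)..1, K r := by
    apply integral_pos_of_continuousOn hcK.continuousOn
    · intro r hr
      exact mul_nonneg (Real.rpow_nonneg hr.1 _) (sq_nonneg _)
    · exact hx₀I
    · exact mul_pos (Real.rpow_pos_of_pos hx₀I.1 _) (by positivity)
  have hNumneg : (∫ r in (0:ℝ)..1, H r) < 0 := by nlinarith
  -- bound for Q on [0,1]
  obtain ⟨CQ, hCQ⟩ := (isCompact_Icc (a := (0:ℝ)) (b := 1)).exists_bound_of_continuousOn
    hcQ.continuousOn
  have hCQ' : ∀ r ∈ Icc (0:ℝ) 1, Q r ≤ CQ := fun r hr =>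
    le_trans (le_abs_self _) (hCQ r hr)
  have hCQnn : 0 ≤ CQ := le_trans (hQnn 0) (hCQ' 0 ⟨le_refl 0, zero_le_one⟩)
  set M : ℝ := mu ^ 2 * (p - 1) * CQ with hMdef
  have hMnn : 0 ≤ M := mul_nonneg (mul_nonneg (sq_nonneg mu) (by linarith)) hCQnn
  set S : Set ℝ := { R : ℝ | ∃ v : ℝ → ℝ, ContDiffOn ℝ 1 v (Set.Icc 0 1) ∧ v 1 = 0 ∧
        (∃ r ∈ Set.Icc (0 : ℝ) 1, v r ≠ 0) ∧
        R = (∫ r in (0 : ℝ)..1, r ^ ((N : ℝ) - 1) *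
              ((deriv v r) ^ 2 - mu ^ 2 * (p - 1) * Q r * (v r) ^ 2))
          / (∫ r in (0 : ℝ)..1, r ^ ((N : ℝ) - 1) * (v r) ^ 2) } with hSdef
  show sInf S < 0
  -- lower bound for all elements of S
  have hbdd : BddBelow S := by
    refine ⟨-M, fun R hR => ?_⟩
    obtain ⟨v, hv, hv1, ⟨rb, hrbI, hrb⟩, hReq⟩ := hR
    have hcv : ContinuousOn v (Icc 0 1) := hv.continuousOn
    -- an interior point where v does not vanish
    obtain ⟨y, hyI, hyne⟩ : ∃ y ∈ Ioo (0:ℝ) 1, v y ≠ 0 := by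
      by_cases hint : rb ∈ Ioo (0:ℝ) 1
      · exact ⟨rb, hint, hrb⟩
      · have hrb0 : rb = 0 := by
          rcases eq_or_lt_of_le hrbI.1 with h | h
          · exact h.symm
          · rcases eq_or_lt_of_le hrbI.2 with h2 | h2
            · exact absurd (h2 ▸ hv1) hrb
            · exact absurd ⟨h, h2⟩ hint
        subst hrb0
        have hcv0 : ContinuousWithinAt v (Icc 0 1) 0 := hcv 0 ⟨le_refl 0, zero_le_one⟩
        have hev : ∀ᶠ x in nhdsWithin 0 (Icc (0:ℝ) 1), v x ≠ 0 :=
          hcv0 (isOpen_compl_singleton.mem_nhds hrb)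
        have hmono : nhdsWithin (0:ℝ) (Ioo (0:ℝ) 1) ≤ nhdsWithin 0 (Icc (0:ℝ) 1) :=
          nhdsWithin_mono _ Ioo_subset_Icc_self
        haveI : (nhdsWithin (0:ℝ) (Ioo (0:ℝ) 1)).NeBot := by
          rw [← mem_closure_iff_nhdsWithin_neBot, closure_Ioo (zero_ne_one)]
          exact ⟨le_refl 0, zero_le_one⟩
        have h2 : ∀ᶠ x in nhdsWithin (0:ℝ) (Ioo (0:ℝ) 1), v x ≠ 0 ∧ x ∈ Ioo (0:ℝ) 1 :=
          (hev.filter_mono hmono).and eventually_mem_nhdsWithin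
        obtain ⟨y, hy1, hy2⟩ := h2.exists
        exact ⟨y, hy2, hy1⟩
    -- denominator is positive
    have hKv : ContinuousOn (fun r : ℝ => r ^ ((N:ℝ)-1) * (v r) ^ 2) (Icc 0 1) :=
      hcpow.continuousOn.mul (hcv.pow 2)
    have hKvnn : ∀ r ∈ Icc (0:ℝ) 1, 0 ≤ r ^ ((N:ℝ)-1) * (v r) ^ 2 := fun r hr =>
      mul_nonneg (Real.rpow_nonneg hr.1 _) (sq_nonneg _)
    have hKvint : IntervalIntegrable (fun r : ℝ => r ^ ((N:ℝ)-1) * (v r) ^ 2) volume 0 1 := by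
      apply ContinuousOn.intervalIntegrable
      rwa [uIcc_of_le zero_le_one]
    have hDv : 0 < ∫ r in (0:ℝ)..1, r ^ ((N:ℝ)-1) * (v r) ^ 2 := by
      apply integral_pos_of_continuousOn hKv hKvnn hyI
      exact mul_pos (Real.rpow_pos_of_pos hyI.1 _) (by positivity)
    -- numerator comparison via derivWithin
    set dv : ℝ → ℝ := derivWithin v (Icc 0 1) with hdv
    have hdvc : ContinuousOn dv (Icc 0 1) :=
      hv.continuousOn_derivWithin (uniqueDiffOn_Icc zero_lt_one) le_rfl
    set J : ℝ → ℝ := fun r => r ^ ((N:ℝ)-1) *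
        ((dv r) ^ 2 - mu ^ 2 * (p - 1) * Q r * (v r) ^ 2) with hJ
    have hJc : ContinuousOn J (Icc 0 1) := by
      apply hcpow.continuousOn.mul
      exact (hdvc.pow 2).sub
        ((continuousOn_const.mul hcQ.continuousOn).mul (hcv.pow 2))
    have hJint : IntervalIntegrable J volume 0 1 := by
      apply ContinuousOn.intervalIntegrable
      rwa [uIcc_of_le zero_le_one]
    have hae : (fun r : ℝ => r ^ ((N:ℝ)-1) *
        ((deriv v r) ^ 2 - mu ^ 2 * (p - 1) * Q r * (v r) ^ 2))
        =ᵐ[volume.restrict (Ioc (0:ℝ) 1)] J := by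
      rw [← Measure.restrict_congr_set (Ioo_ae_eq_Ioc (a := (0:ℝ)) (b := 1))]
      filter_upwards [ae_restrict_mem measurableSet_Ioo] with x hx
      have hdd : deriv v x = dv x :=
        (derivWithin_of_mem_nhds (Icc_mem_nhds hx.1 hx.2)).symm
      rw [hdd]
    have hfint : IntervalIntegrable (fun r : ℝ => r ^ ((N:ℝ)-1) *
        ((deriv v r) ^ 2 - mu ^ 2 * (p - 1) * Q r * (v r) ^ 2)) volume 0 1 := by
      rw [intervalIntegrable_iff_integrableOn_Ioc_of_le zero_le_one]
      exact ((intervalIntegrable_iff_integrableOn_Ioc_of_le zero_le_one).mp hJint).congr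
        hae.symm
    have hfeq : (∫ r in (0:ℝ)..1, r ^ ((N:ℝ)-1) *
        ((deriv v r) ^ 2 - mu ^ 2 * (p - 1) * Q r * (v r) ^ 2)) = ∫ r in (0:ℝ)..1, J r := by
      rw [intervalIntegral.integral_of_le zero_le_one,
        intervalIntegral.integral_of_le zero_le_one]
      exact MeasureTheory.integral_congr_ae hae
    -- pointwise lower bound for J
    have hJlb : ∀ r ∈ Icc (0:ℝ) 1,
        (-M) * (r ^ ((N:ℝ)-1) * (v r) ^ 2) ≤ J r := by
      intro r hr
      simp only [hJ]
      have hql : mu ^ 2 * (p - 1) * Q r ≤ M := by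
        rw [hMdef]
        apply mul_le_mul_of_nonneg_left (hCQ' r hr)
        nlinarith [sq_nonneg mu]
      have hrp : 0 ≤ r ^ ((N:ℝ)-1) := Real.rpow_nonneg hr.1 _
      have hv2 : 0 ≤ (v r) ^ 2 := sq_nonneg _
      nlinarith [sq_nonneg (dv r), mul_le_mul_of_nonneg_right hql hv2,
        mul_le_mul_of_nonneg_left (mul_le_mul_of_nonneg_right hql hv2) hrp]
    have hJge : (-M) * (∫ r in (0:ℝ)..1, r ^ ((N:ℝ)-1) * (v r) ^ 2)
        ≤ ∫ r in (0:ℝ)..1, J r := by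
      rw [← intervalIntegral.integral_const_mul]
      exact integral_mono_on zero_le_one (hKvint.const_mul _) hJint hJlb
    -- conclude
    rw [hReq, le_div_iff₀ hDv, hfeq]
    linarith
  -- membership of the test ratio
  have hmem : (∫ r in (0:ℝ)..1, H r) / (∫ r in (0:ℝ)..1, K r) ∈ S := by
    refine ⟨deriv U, (hU2.of_le (by norm_num)).contDiffOn, h1,
      ⟨x₀, ⟨hx₀I.1.le, hx₀I.2.le⟩, hx₀⟩, rfl⟩
  exact lt_of_le_of_lt (csInf_le hbdd hmem) (div_neg_of_neg_of_pos hNumneg hDpos)
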